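/- Let γ ∈ ℝ and let P be either (0, 1, 0) or (0, −1, 0). The Jacobian matrix of the vector field G_γ at P has eigenvalues 4, 3/2 and 6 − 3γ (i.e. its characteristic polynomial is (X − 4)(X − 3/2)(X − (6 − 3γ))). In particular, for γ ∈ [0, 2], all three eigenvalues are positive if and only if γ < 2. -/

import Mathlib

open Polynomial

/-- Auxiliary: coordinate projection as a continuous linear map. -/
noncomputable def prj (i : Fin 3) : (Fin 3 → ℝ) →L[ℝ] ℝ := ContinuousLinearMap.proj i

/-- The averaged Bianchi V guiding vector field `G_γ` in coordinates
`p = (Ω, Σ, K) = (p 0, p 1, p 2)`. -/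
noncomputable def GBV (γ : ℝ) : (Fin 3 → ℝ) → (Fin 3 → ℝ) := fun p =>
  ![-(1 / 2) * p 0 *
      (3 * γ * ((p 1) ^ 2 + (p 0) ^ 2 + p 2 - 1) - 6 * (p 1) ^ 2 - 3 * (p 0) ^ 2
        - 2 * p 2 + 3),
    (1 / 2) * p 1 *
      (-(3 * γ) * ((p 1) ^ 2 + (p 0) ^ 2 + p 2 - 1) + 6 * (p 1) ^ 2 + 3 * (p 0) ^ 2
        + 2 * p 2 - 6),
    -(p 2) *
      (3 * γ * ((p 1) ^ 2 + (p 0) ^ 2 + p 2 - 1) - 6 * (p 1) ^ 2 - 3 * (p 0) ^ 2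
        - 2 * p 2 + 2)]

/-- The Jacobian of `G_γ` at either of the points `P₄,₅ = (0, ±1, 0)` has
eigenvalues `4`, `3/2` and `6 - 3γ` (characteristic polynomial
`(X - 4)(X - 3/2)(X - (6 - 3γ))`); for `γ ∈ [0,2]` all three eigenvalues are
positive iff `γ < 2`. -/
theorem bianchiV_jacobian_P45 (γ s : ℝ) (hs : s = 1 ∨ s = -1) :
    ∃ J : Matrix (Fin 3) (Fin 3) ℝ,
      HasFDerivAt (GBV γ)
        (LinearMap.toContinuousLinearMap (Matrix.toLin' J)) ![0, s, 0] ∧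
      J.charpoly = (X - C 4) * (X - C (3 / 2)) * (X - C (6 - 3 * γ)) ∧
      (0 ≤ γ ∧ γ ≤ 2 →
        (((0 : ℝ) < 4 ∧ (0 : ℝ) < 3 / 2 ∧ 0 < 6 - 3 * γ) ↔ γ < 2)) := by
  have hs2 : s ^ 2 = 1 := by rcases hs with rfl | rfl <;> norm_num
  set x : Fin 3 → ℝ := ![0, s, 0] with hx
  refine ⟨!![3/2, 0, 0; 0, 6 - 3*γ, s*(2 - 3*γ)/2; 0, 0, 4], ?_, ?_, ?_⟩
  · rw [hasFDerivAt_pi']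
    have h0 : HasFDerivAt (fun p : Fin 3 → ℝ => p 0)
        (prj 0) x := hasFDerivAt_apply 0 x
    have h1 : HasFDerivAt (fun p : Fin 3 → ℝ => p 1)
        (prj 1) x := hasFDerivAt_apply 1 x
    have h2 : HasFDerivAt (fun p : Fin 3 → ℝ => p 2)
        (prj 2) x := hasFDerivAt_apply 2 x
    have hsq1 : HasFDerivAt (fun p : Fin 3 → ℝ => (p 1) ^ 2)
        (x 1 • prj 1 + x 1 • prj 1) x := by
      simpa [pow_two, Pi.mul_def] using h1.mul h1
    have hsq0 : HasFDerivAt (fun p : Fin 3 → ℝ => (p 0) ^ 2)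
        (x 0 • prj 0 + x 0 • prj 0) x := by
      simpa [pow_two, Pi.mul_def] using h0.mul h0
    have hQ : HasFDerivAt
        (fun p : Fin 3 → ℝ => (p 1) ^ 2 + (p 0) ^ 2 + p 2 - 1)
        ((x 1 • prj 1 + x 1 • prj 1)
          + (x 0 • prj 0 + x 0 • prj 0)
          + prj 2) x := by
      exact ((hsq1.add hsq0).add h2).sub_const 1
    intro i
    fin_cases i
    · -- component 0
      have key : HasFDerivAt (fun p : Fin 3 → ℝ => GBV γ p 0) _ x :=
        (h0.const_mul (-(1/2))).mul
          ((((hQ.const_mul (3*γ)).sub (hsq1.const_mul 6)).sub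
            (hsq0.const_mul 3)).sub (h2.const_mul 2) |>.add_const 3)
      refine key.congr_fderiv ?_
      ext v
      simp [hx, prj, Matrix.mulVec, dotProduct, Fin.sum_univ_three, Matrix.vecHead, Matrix.vecTail]
      linear_combination ((3 - 3/2*γ) * v 0) * hs2
    · have key : HasFDerivAt (fun p : Fin 3 → ℝ => GBV γ p 1) _ x :=
        (h1.const_mul (1/2)).mul
          ((((hQ.const_mul (-(3*γ))).add (hsq1.const_mul 6)).add
            (hsq0.const_mul 3)).add (h2.const_mul 2) |>.sub_const 6)
      refine key.congr_fderiv ?_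
      ext v
      simp [hx, prj, Matrix.mulVec, dotProduct, Fin.sum_univ_three, Matrix.vecHead, Matrix.vecTail]
      linear_combination ((9 - 9/2*γ) * v 1) * hs2
    · have key : HasFDerivAt (fun p : Fin 3 → ℝ => GBV γ p 2) _ x :=
        (h2.neg).mul
          ((((hQ.const_mul (3*γ)).sub (hsq1.const_mul 6)).sub
            (hsq0.const_mul 3)).sub (h2.const_mul 2) |>.add_const 2)
      refine key.congr_fderiv ?_
      ext v
      simp [hx, prj, Matrix.mulVec, dotProduct, Fin.sum_univ_three, Matrix.vecHead, Matrix.vecTail]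
      linear_combination ((6 - 3*γ) * v 2) * hs2
  · rw [Matrix.charpoly, Matrix.det_fin_three]
    simp [Matrix.charmatrix_apply, Matrix.one_apply]
    ring
  · rintro ⟨h0, h2⟩
    constructor
    · rintro ⟨-, -, h⟩; linarith
    · intro h; exact ⟨by norm_num, by norm_num, by linarith⟩
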